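/- For any real θ and positive integers n, k with 0 ≤ k < n, the average (1/n) ∑_{ℓ=0}^{n-1} (cos((θ+ℓπ)/n))^{2k} equals (1/4^k)·C(2k,k), where C denotes the binomial coefficient. -/

import Mathlib

open Real Finset

lemma cos_pow_aux (x : ℝ) (k : ℕ) :
    (Complex.cos (x : ℂ)) ^ (2 * k) * 4 ^ k
      = ∑ j ∈ Finset.range (2 * k + 1),
          Complex.exp ((2 * (j : ℂ) - 2 * (k : ℂ)) * (x : ℂ) * Complex.I)
            * (Nat.choose (2 * k) j : ℂ) := by
  have h2 : 2 * Complex.cos x = Complex.exp (x * Complex.I)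
      + Complex.exp (-x * Complex.I) := Complex.two_cos x
  have h4 : (Complex.cos (x : ℂ)) ^ (2 * k) * 4 ^ k
      = (2 * Complex.cos (x : ℂ)) ^ (2 * k) := by
    rw [mul_pow]
    have : (2 : ℂ) ^ (2 * k) = 4 ^ k := by
      rw [pow_mul]; norm_num
    rw [this]; ring
  rw [h4, h2, add_pow]
  refine Finset.sum_congr rfl fun j hj => ?_
  have hj' : j ≤ 2 * k := Nat.lt_succ_iff.mp (Finset.mem_range.mp hj)
  rw [← Complex.exp_nat_mul, ← Complex.exp_nat_mul, ← Complex.exp_add]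
  congr 2
  push_cast [Nat.cast_sub hj']
  ring

theorem stmt_0 (θ : ℝ) (n k : ℕ) (hn : 0 < n) (hk : k < n) :
    (1 / (n : ℝ)) * ∑ ℓ ∈ Finset.range n, (Real.cos ((θ + ℓ * Real.pi) / n)) ^ (2 * k)
      = (1 / 4 ^ k) * (Nat.choose (2 * k) k : ℝ) := by
  have hn' : (n : ℝ) ≠ 0 := Nat.cast_ne_zero.mpr hn.ne'
  have hnC : (n : ℂ) ≠ 0 := Nat.cast_ne_zero.mpr hn.ne'
  have hπ : (Real.pi : ℂ) ≠ 0 := Complex.ofReal_ne_zero.mpr Real.pi_ne_zero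
  have main : ((∑ ℓ ∈ Finset.range n,
        (Real.cos ((θ + ℓ * Real.pi) / n)) ^ (2 * k) : ℝ) : ℂ) * 4 ^ k
      = (n : ℂ) * (Nat.choose (2 * k) k : ℂ) := by
    have hcast : ∀ ℓ : ℕ, ((θ : ℂ) + (ℓ : ℂ) * (Real.pi : ℂ)) / (n : ℂ)
        = ((((θ + ℓ * Real.pi) / n : ℝ)) : ℂ) := by
      intro ℓ; push_cast; ring
    push_cast
    simp only [hcast]
    rw [Finset.sum_mul]
    have step1 : (∑ ℓ ∈ Finset.range n,
          (Complex.cos ((((θ + ℓ * Real.pi) / n : ℝ)) : ℂ)) ^ (2 * k) * 4 ^ k)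
        = ∑ ℓ ∈ Finset.range n, ∑ j ∈ Finset.range (2 * k + 1),
            Complex.exp ((2 * (j : ℂ) - 2 * (k : ℂ))
              * ((((θ + ℓ * Real.pi) / n : ℝ)) : ℂ) * Complex.I)
              * (Nat.choose (2 * k) j : ℂ) :=
      Finset.sum_congr rfl fun ℓ _ => cos_pow_aux _ k
    rw [step1, Finset.sum_comm]
    have inner : ∀ j ∈ Finset.range (2 * k + 1),
        (∑ ℓ ∈ Finset.range n,
          Complex.exp ((2 * (j : ℂ) - 2 * (k : ℂ))
            * ((((θ + ℓ * Real.pi) / n : ℝ)) : ℂ) * Complex.I)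
            * (Nat.choose (2 * k) j : ℂ))
        = if j = k then (n : ℂ) * (Nat.choose (2 * k) k : ℂ) else 0 := by
      intro j hj
      have hj' : j ≤ 2 * k := Nat.lt_succ_iff.mp (Finset.mem_range.mp hj)
      by_cases hjk : j = k
      · subst hjk
        rw [if_pos rfl]
        simp only [sub_self, zero_mul, Complex.exp_zero, one_mul, Finset.sum_const,
          Finset.card_range, nsmul_eq_mul]
      · rw [if_neg hjk]
        set m : ℤ := 2 * (j : ℤ) - 2 * (k : ℤ) with hm
        have hmC : (2 * (j : ℂ) - 2 * (k : ℂ)) = (m : ℂ) := by push_cast [hm]; ring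
        have hm0 : m ≠ 0 := by omega
        rw [← Finset.sum_mul]
        set w : ℂ := Complex.exp ((m : ℂ) * ((Real.pi : ℂ) / n) * Complex.I) with hw
        have hterm : ∀ ℓ : ℕ,
            Complex.exp ((2 * (j : ℂ) - 2 * (k : ℂ))
              * ((((θ + ℓ * Real.pi) / n : ℝ)) : ℂ) * Complex.I)
            = Complex.exp ((m : ℂ) * ((θ : ℂ) / n) * Complex.I) * w ^ ℓ := by
          intro ℓ
          rw [hmC, hw, ← Complex.exp_nat_mul, ← Complex.exp_add]
          congr 1
          push_cast
          field_simp
        rw [Finset.sum_congr rfl fun ℓ _ => hterm ℓ, ← Finset.mul_sum]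
        have hw1 : w ≠ 1 := by
          rw [hw, Ne, Complex.exp_eq_one_iff]
          rintro ⟨t, ht⟩
          have ht2 : (m : ℂ) * ((Real.pi : ℂ) * Complex.I)
              = ((t : ℂ) * 2 * n) * ((Real.pi : ℂ) * Complex.I) := by
            field_simp at ht
            linear_combination (↑Real.pi * Complex.I) * ht
          have hmt : (m : ℂ) = (t : ℂ) * 2 * n :=
            mul_right_cancel₀ (mul_ne_zero hπ Complex.I_ne_zero) ht2
          have hmZ : m = t * 2 * n := by exact_mod_cast hmt
          have ht0 : t ≠ 0 := by
            rintro rfl; simp at hmZ; omega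
          have habs : (1 : ℤ) ≤ |t| := Int.one_le_abs ht0
          have hmabs : |m| = |t| * (2 * n) := by
            rw [hmZ, abs_mul, abs_mul]
            simp [abs_of_nonneg]
            ring
          have hub : |m| ≤ 2 * (k : ℤ) := by
            rw [abs_le]; omega
          have hlb : 2 * (n : ℤ) ≤ |m| := by
            rw [hmabs]
            nlinarith [Int.natCast_nonneg n]
          have : (k : ℤ) < n := by exact_mod_cast hk
          omega
        have hwn : w ^ n = 1 := by
          rw [hw, ← Complex.exp_nat_mul]
          have : (n : ℂ) * ((m : ℂ) * ((Real.pi : ℂ) / n) * Complex.I)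
              = ((j : ℤ) - (k : ℤ)) * (2 * (Real.pi : ℂ) * Complex.I) := by
            push_cast [hm]
            field_simp
          rw [this]
          exact_mod_cast Complex.exp_int_mul_two_pi_mul_I ((j : ℤ) - (k : ℤ))
        rw [geom_sum_eq hw1, hwn]
        simp
    rw [Finset.sum_congr rfl inner]
    simp only [Finset.sum_ite_eq', Finset.mem_range]
    rw [if_pos (by omega)]
  have mainR : (∑ ℓ ∈ Finset.range n,
        (Real.cos ((θ + ℓ * Real.pi) / n)) ^ (2 * k) : ℝ) * 4 ^ k
      = (n : ℝ) * (Nat.choose (2 * k) k : ℝ) := by exact_mod_cast main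
  have h4 : (4 : ℝ) ^ k ≠ 0 := by positivity
  field_simp
  linarith [mainR]
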